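/- For every τ ∈ ℍ and z ∈ ℂ such that Θ_{1,2}(τ,z) − Θ_{−1,2}(τ,z) ≠ 0, the normalized Weyl–Kac characters of ŝl₂ satisfy the identity between levels 16 and 8: χ^{(16)}_2(τ,z) + χ^{(16)}_{14}(τ,z) − χ^{(16)}_8(τ,z) = (χ^{(8)}_0(τ,z) + χ^{(8)}_8(τ,z))·(χ^{(8)}_2(τ,z) + χ^{(8)}_6(τ,z)) − (χ^{(8)}_4(τ,z))². -/

import Mathlib

/-- The rank-one theta function `Θ_{m,k}(τ,z) = ∑_{n ∈ ℤ + m/(2k)} exp(2πik(n²τ + nz))`,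
parameterized as `n = j + m/(2k)` with `j ∈ ℤ`. -/
noncomputable def Th1 (m : ℤ) (k : ℕ) (τ : UpperHalfPlane) (z : ℂ) : ℂ :=
  ∑' j : ℤ, Complex.exp (2 * Real.pi * Complex.I * (k : ℂ) *
    (((j : ℂ) + (m : ℂ) / (2 * (k : ℂ))) ^ 2 * (τ : ℂ) +
      ((j : ℂ) + (m : ℂ) / (2 * (k : ℂ))) * z))

/-- The normalized Weyl–Kac character `χ^{(k)}_λ` of the level-`k` integrable irreducible
highest-weight module of highest weight `λ` over the affine Kac–Moody algebra `ŝl₂`: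
`χ^{(k)}_λ = (Θ_{λ+1,k+2} − Θ_{−λ−1,k+2}) / (Θ_{1,2} − Θ_{−1,2})`. -/
noncomputable def chiA1 (k lam : ℕ) (τ : UpperHalfPlane) (z : ℂ) : ℂ :=
  (Th1 ((lam : ℤ) + 1) (k + 2) τ z - Th1 (-(lam : ℤ) - 1) (k + 2) τ z) /
    (Th1 1 2 τ z - Th1 (-1) 2 τ z)

/-- Norm-summability of the theta-series summands. -/
lemma summable_norm_th (k : ℕ) (hk : 0 < k) (c : ℂ) (τ : UpperHalfPlane) (z : ℂ) :
    Summable fun j : ℤ => ‖Complex.exp (2 * Real.pi * Complex.I * (k : ℂ) *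
      (((j : ℂ) + c) ^ 2 * (τ : ℂ) + ((j : ℂ) + c) * z))‖ := by
  have h1 : ∀ j : ℤ, Complex.exp (2 * Real.pi * Complex.I * (k : ℂ) *
      (((j : ℂ) + c) ^ 2 * (τ : ℂ) + ((j : ℂ) + c) * z))
      = Complex.exp (2 * Real.pi * Complex.I * (k : ℂ) * (c ^ 2 * (τ : ℂ) + c * z)) *
        jacobiTheta₂_term j ((k : ℂ) * (z + 2 * c * (τ : ℂ))) (2 * (k : ℂ) * (τ : ℂ)) := by
    intro j
    rw [jacobiTheta₂_term, ← Complex.exp_add]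
    congr 1
    ring
  simp only [h1, norm_mul]
  apply Summable.mul_left
  have hT : (0:ℝ) < 2 * (k:ℝ) * τ.im := by
    have := τ.im_pos
    positivity
  have hT' : (2 * (k : ℂ) * (τ : ℂ)).im = 2 * (k:ℝ) * τ.im := by
    simp [Complex.mul_im, UpperHalfPlane.coe_im]
  refine Summable.of_nonneg_of_le (fun n => norm_nonneg _) (fun n => ?_)
    ((summable_pow_mul_jacobiTheta₂_term_bound
      |((k : ℂ) * (z + 2 * c * (τ : ℂ))).im| hT 0).congr (fun n => by
        rw [pow_zero, one_mul]))
  exact norm_jacobiTheta₂_term_le hT le_rfl (le_of_eq hT'.symm) n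

/-- The class function: sum over a lattice coset. -/
noncomputable def Fc (τ : UpperHalfPlane) (z : ℂ) (S N : ℤ) : ℂ :=
  ∑' pq : ℤ × ℤ, Complex.exp (2 * Real.pi * Complex.I *
    ((20 * ((pq.1 : ℂ) + (S : ℂ) / 40) ^ 2 + 180 * ((pq.2 : ℂ) + (N : ℂ) / 120) ^ 2) * (τ : ℂ)
      + 20 * ((pq.1 : ℂ) + (S : ℂ) / 40) * z))

lemma Fc_shift (τ : UpperHalfPlane) (z : ℂ) (S N t u : ℤ) :
    Fc τ z (S + 40 * t) (N + 120 * u) = Fc τ z S N := by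
  rw [Fc, Fc, ← ((Equiv.subRight t).prodCongr (Equiv.subRight u)).tsum_eq]
  apply tsum_congr
  rintro ⟨p, q⟩
  simp only [Equiv.prodCongr_apply, Equiv.subRight_apply, id_eq, Prod.map]
  congr 1
  push_cast
  ring

lemma Fc_neg (τ : UpperHalfPlane) (z : ℂ) (S N : ℤ) :
    Fc τ z S (-N) = Fc τ z S N := by
  rw [Fc, Fc, ← ((Equiv.refl ℤ).prodCongr (Equiv.neg ℤ)).tsum_eq]
  apply tsum_congr
  rintro ⟨p, q⟩
  simp only [Equiv.prodCongr_apply, Equiv.coe_refl, id_eq, Equiv.neg_apply, Prod.map]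
  congr 1
  push_cast
  ring

lemma Fc_congr (τ : UpperHalfPlane) (z : ℂ) (S N S' N' t u : ℤ)
    (h1 : S = S' + 40 * t) (h2 : N = N' + 120 * u ∨ N = -N' + 120 * u) :
    Fc τ z S N = Fc τ z S' N' := by
  rcases h2 with h2 | h2
  · rw [h1, h2, Fc_shift]
  · rw [h1, h2, Fc_shift τ z S' (-N') t u, Fc_neg]

/-- Reindexing for products of level-18 and level-2 thetas. -/
def EL : Fin 10 × ℤ × ℤ ≃ ℤ × ℤ where
  toFun x := (x.2.1 + x.2.2, x.2.1 - 9 * x.2.2 - (x.1 : ℤ))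
  invFun y := (⟨((y.1 - y.2) % 10).toNat, by omega⟩,
    (y.1 - (y.1 - y.2) / 10, (y.1 - y.2) / 10))
  left_inv := by
    rintro ⟨⟨r, hr⟩, P, q⟩
    simp only [Fin.val_mk]
    have h : (P + q) - (P - 9 * q - (r : ℤ)) = 10 * q + r := by ring
    refine Prod.ext (Fin.ext ?_) (Prod.ext ?_ ?_) <;> simp only [h, Fin.val_mk] <;> omega
  right_inv := by
    rintro ⟨a, b⟩
    refine Prod.ext ?_ ?_ <;> simp only [Fin.val_mk] <;> push_cast <;> omega

/-- Reindexing for products of two level-10 thetas. -/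
def ER : (Fin 2 × Fin 3) × ℤ × ℤ ≃ ℤ × ℤ where
  toFun x := (x.2.1 + 3 * x.2.2 + (x.1.2 : ℤ) + (x.1.1 : ℤ), x.2.1 - 3 * x.2.2 - (x.1.2 : ℤ))
  invFun y := ((⟨((y.1 + y.2) % 2).toNat, by omega⟩,
      ⟨(((y.1 - y.2 - (y.1 + y.2) % 2) / 2) % 3).toNat, by omega⟩),
    ((y.1 + y.2 - (y.1 + y.2) % 2) / 2,
     ((y.1 - y.2 - (y.1 + y.2) % 2) / 2 - ((y.1 - y.2 - (y.1 + y.2) % 2) / 2) % 3) / 3))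
  left_inv := by
    rintro ⟨⟨⟨e, he⟩, ⟨i, hi⟩⟩, t, p⟩
    have h1 : (t + 3 * p + (i : ℤ) + (e : ℤ)) + (t - 3 * p - (i : ℤ)) = 2 * t + e := by ring
    have h2 : (t + 3 * p + (i : ℤ) + (e : ℤ)) - (t - 3 * p - (i : ℤ)) = 6 * p + 2 * i + e := by
      ring
    refine Prod.ext (Prod.ext (Fin.ext ?_) (Fin.ext ?_)) (Prod.ext ?_ ?_) <;>
      simp only [h1, h2, Fin.val_mk] <;> omega
  right_inv := by
    rintro ⟨a, b⟩
    refine Prod.ext ?_ ?_ <;> simp only [Fin.val_mk] <;> push_cast <;> omega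

set_option maxHeartbeats 2000000 in
lemma P1 (τ : UpperHalfPlane) (z : ℂ) (m m' e : ℤ) (he : m - 9 * m' = 3 * e) :
    Th1 m 18 τ z * Th1 m' 2 τ z
      = ∑ r ∈ Finset.range 10, Fc τ z (m + m' - 4 * (r : ℤ)) (12 * (r : ℤ) + e) := by
  obtain rfl : m = 9 * m' + 3 * e := by omega
  have hf := summable_norm_th 18 (by norm_num)
    (((9 * m' + 3 * e : ℤ) : ℂ) / (2 * ((18 : ℕ) : ℂ))) τ z
  have hg := summable_norm_th 2 (by norm_num) (((m' : ℤ) : ℂ) / (2 * ((2 : ℕ) : ℂ))) τ z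
  rw [Th1, Th1, tsum_mul_tsum_of_summable_norm hf hg]
  have hsum := summable_mul_of_summable_norm hf hg
  rw [← EL.tsum_eq]
  have hs2 : Summable fun c : Fin 10 × ℤ × ℤ =>
      (fun x : ℤ × ℤ => Complex.exp (2 * (Real.pi : ℂ) * Complex.I * ((18 : ℕ) : ℂ) *
        (((x.1 : ℂ) + ((9 * m' + 3 * e : ℤ) : ℂ) / (2 * ((18 : ℕ) : ℂ))) ^ 2 * (τ : ℂ) +
          ((x.1 : ℂ) + ((9 * m' + 3 * e : ℤ) : ℂ) / (2 * ((18 : ℕ) : ℂ))) * z)) *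
        Complex.exp (2 * (Real.pi : ℂ) * Complex.I * ((2 : ℕ) : ℂ) *
        (((x.2 : ℂ) + ((m' : ℤ) : ℂ) / (2 * ((2 : ℕ) : ℂ))) ^ 2 * (τ : ℂ) +
          ((x.2 : ℂ) + ((m' : ℤ) : ℂ) / (2 * ((2 : ℕ) : ℂ))) * z))) (EL c) :=
    EL.summable_iff.mpr hsum
  rw [Summable.tsum_prod hs2, tsum_fintype]
  rw [← Fin.sum_univ_eq_sum_range
    (fun r : ℕ => Fc τ z (9 * m' + 3 * e + m' - 4 * (r : ℤ)) (12 * (r : ℤ) + e)) 10]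
  refine Finset.sum_congr rfl fun r _ => ?_
  rw [Fc]
  apply tsum_congr
  rintro ⟨P, q⟩
  simp only [EL, Equiv.coe_fn_mk]
  rw [← Complex.exp_add]
  congr 1
  push_cast
  ring

set_option maxHeartbeats 2000000 in
lemma P2 (τ : UpperHalfPlane) (z : ℂ) (a b : ℤ) :
    Th1 a 10 τ z * Th1 b 10 τ z
      = ∑ ε ∈ Finset.range 2, ∑ i ∈ Finset.range 3,
          Fc τ z (a + b + 20 * (ε : ℤ)) (a - b + 20 * (ε : ℤ) + 40 * (i : ℤ)) := by
  have hf := summable_norm_th 10 (by norm_num) (((a : ℤ) : ℂ) / (2 * ((10 : ℕ) : ℂ))) τ z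
  have hg := summable_norm_th 10 (by norm_num) (((b : ℤ) : ℂ) / (2 * ((10 : ℕ) : ℂ))) τ z
  rw [Th1, Th1, tsum_mul_tsum_of_summable_norm hf hg]
  have hsum := summable_mul_of_summable_norm hf hg
  rw [← ER.tsum_eq]
  have hs2 : Summable fun c : (Fin 2 × Fin 3) × ℤ × ℤ =>
      (fun x : ℤ × ℤ => Complex.exp (2 * (Real.pi : ℂ) * Complex.I * ((10 : ℕ) : ℂ) *
        (((x.1 : ℂ) + ((a : ℤ) : ℂ) / (2 * ((10 : ℕ) : ℂ))) ^ 2 * (τ : ℂ) +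
          ((x.1 : ℂ) + ((a : ℤ) : ℂ) / (2 * ((10 : ℕ) : ℂ))) * z)) *
        Complex.exp (2 * (Real.pi : ℂ) * Complex.I * ((10 : ℕ) : ℂ) *
        (((x.2 : ℂ) + ((b : ℤ) : ℂ) / (2 * ((10 : ℕ) : ℂ))) ^ 2 * (τ : ℂ) +
          ((x.2 : ℂ) + ((b : ℤ) : ℂ) / (2 * ((10 : ℕ) : ℂ))) * z))) (ER c) :=
    ER.summable_iff.mpr hsum
  rw [Summable.tsum_prod hs2, tsum_fintype, Fintype.sum_prod_type]
  rw [← Fin.sum_univ_eq_sum_range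
    (fun ε : ℕ => ∑ i ∈ Finset.range 3,
      Fc τ z (a + b + 20 * (ε : ℤ)) (a - b + 20 * (ε : ℤ) + 40 * (i : ℤ))) 2]
  refine Finset.sum_congr rfl fun ε _ => ?_
  rw [← Fin.sum_univ_eq_sum_range
    (fun i : ℕ => Fc τ z (a + b + 20 * ((ε : ℕ) : ℤ))
      (a - b + 20 * ((ε : ℕ) : ℤ) + 40 * (i : ℤ))) 3]
  refine Finset.sum_congr rfl fun i _ => ?_
  rw [Fc]
  apply tsum_congr
  rintro ⟨t, p⟩
  simp only [ER, Equiv.coe_fn_mk]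
  rw [← Complex.exp_add]
  congr 1
  push_cast
  ring

lemma qL1 (τ : UpperHalfPlane) (z : ℂ) :
    Th1 (3) 18 τ z * Th1 (1) 2 τ z = Fc τ z 4 2 + Fc τ z 0 10 + Fc τ z 36 22 + Fc τ z 32 34 + Fc τ z 28 46 + Fc τ z 24 58 + Fc τ z 20 50 + Fc τ z 16 38 + Fc τ z 12 26 + Fc τ z 8 14 := by
  rw [P1 τ z (3) (1) (-2) (by norm_num)]
  norm_num [Finset.sum_range_succ]
  linear_combination (Fc_congr τ z (4) (-2) (4) (2) (0) (0) (by norm_num) (Or.inr (by norm_num))) + (Fc_congr τ z (-4) (22) (36) (22) (-1) (0) (by norm_num) (Or.inl (by norm_num))) + (Fc_congr τ z (-8) (34) (32) (34) (-1) (0) (by norm_num) (Or.inl (by norm_num))) + (Fc_congr τ z (-12) (46) (28) (46) (-1) (0) (by norm_num) (Or.inl (by norm_num))) + (Fc_congr τ z (-16) (58) (24) (58) (-1) (0) (by norm_num) (Or.inl (by norm_num))) + (Fc_congr τ z (-20) (70) (20) (50) (-1) (1) (by norm_num) (Or.inr (by norm_num))) + (Fc_congr τ z (-24) (82) (16) (38)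 (-1) (1) (by norm_num) (Or.inr (by norm_num))) + (Fc_congr τ z (-28) (94) (12) (26) (-1) (1) (by norm_num) (Or.inr (by norm_num))) + (Fc_congr τ z (-32) (106) (8) (14) (-1) (1) (by norm_num) (Or.inr (by norm_num)))

lemma qL2 (τ : UpperHalfPlane) (z : ℂ) :
    Th1 (3) 18 τ z * Th1 (-1) 2 τ z = Fc τ z 2 4 + Fc τ z 38 16 + Fc τ z 34 28 + Fc τ z 30 40 + Fc τ z 26 52 + Fc τ z 22 56 + Fc τ z 18 44 + Fc τ z 14 32 + Fc τ z 10 20 + Fc τ z 6 8 := by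
  rw [P1 τ z (3) (-1) (4) (by norm_num)]
  norm_num [Finset.sum_range_succ]
  linear_combination (Fc_congr τ z (-2) (16) (38) (16) (-1) (0) (by norm_num) (Or.inl (by norm_num))) + (Fc_congr τ z (-6) (28) (34) (28) (-1) (0) (by norm_num) (Or.inl (by norm_num))) + (Fc_congr τ z (-10) (40) (30) (40) (-1) (0) (by norm_num) (Or.inl (by norm_num))) + (Fc_congr τ z (-14) (52) (26) (52) (-1) (0) (by norm_num) (Or.inl (by norm_num))) + (Fc_congr τ z (-18) (64) (22) (56) (-1) (1) (by norm_num) (Or.inr (by norm_num))) + (Fc_congr τ z (-22) (76) (18) (44) (-1) (1) (by norm_num) (Or.inr (by norm_num))) + (Fc_congr τ z (-26) (88) (14) (32) (-1) (1) (by norm_num) (Or.inr (by norm_num))) + (Fc_congr τ z (-30) (100) (10) (20) (-1) (1) (by norm_num) (Or.inr (by norm_num))) + (Fc_congr τ z (-34) (112) (6) (8) (-1) (1) (by norm_num) (Or.inr (by norm_num)))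

lemma qL3 (τ : UpperHalfPlane) (z : ℂ) :
    Th1 (-3) 18 τ z * Th1 (1) 2 τ z = Fc τ z 38 4 + Fc τ z 34 8 + Fc τ z 30 20 + Fc τ z 26 32 + Fc τ z 22 44 + Fc τ z 18 56 + Fc τ z 14 52 + Fc τ z 10 40 + Fc τ z 6 28 + Fc τ z 2 16 := by
  rw [P1 τ z (-3) (1) (-4) (by norm_num)]
  norm_num [Finset.sum_range_succ]
  linear_combination (Fc_congr τ z (-2) (-4) (38) (4) (-1) (0) (by norm_num) (Or.inr (by norm_num))) + (Fc_congr τ z (-6) (8) (34) (8) (-1) (0) (by norm_num) (Or.inl (by norm_num))) + (Fc_congr τ z (-10) (20) (30) (20) (-1) (0) (by norm_num) (Or.inl (by norm_num))) + (Fc_congr τ z (-14) (32) (26) (32) (-1) (0) (by norm_num) (Or.inl (by norm_num))) + (Fc_congr τ z (-18) (44) (22) (44) (-1) (0) (by norm_num) (Or.inl (by norm_num))) + (Fc_congr τ z (-22) (56) (18) (56) (-1) (0) (by norm_num) (Or.inl (by norm_num))) + (Fc_congr τ z (-26) (68) (14) (52) (-1) (1) (by norm_num) (Or.inr (by norm_num)))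 + (Fc_congr τ z (-30) (80) (10) (40) (-1) (1) (by norm_num) (Or.inr (by norm_num))) + (Fc_congr τ z (-34) (92) (6) (28) (-1) (1) (by norm_num) (Or.inr (by norm_num))) + (Fc_congr τ z (-38) (104) (2) (16) (-1) (1) (by norm_num) (Or.inr (by norm_num)))

lemma qL4 (τ : UpperHalfPlane) (z : ℂ) :
    Th1 (-3) 18 τ z * Th1 (-1) 2 τ z = Fc τ z 36 2 + Fc τ z 32 14 + Fc τ z 28 26 + Fc τ z 24 38 + Fc τ z 20 50 + Fc τ z 16 58 + Fc τ z 12 46 + Fc τ z 8 34 + Fc τ z 4 22 + Fc τ z 0 10 := by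
  rw [P1 τ z (-3) (-1) (2) (by norm_num)]
  norm_num [Finset.sum_range_succ]
  linear_combination (Fc_congr τ z (-4) (2) (36) (2) (-1) (0) (by norm_num) (Or.inl (by norm_num))) + (Fc_congr τ z (-8) (14) (32) (14) (-1) (0) (by norm_num) (Or.inl (by norm_num))) + (Fc_congr τ z (-12) (26) (28) (26) (-1) (0) (by norm_num) (Or.inl (by norm_num))) + (Fc_congr τ z (-16) (38) (24) (38) (-1) (0) (by norm_num) (Or.inl (by norm_num))) + (Fc_congr τ z (-20) (50) (20) (50) (-1) (0) (by norm_num) (Or.inl (by norm_num))) + (Fc_congr τ z (-24) (62) (16) (58) (-1) (1) (by norm_num) (Or.inr (by norm_num))) + (Fc_congr τ z (-28) (74) (12) (46) (-1) (1) (by norm_num) (Or.inr (by norm_num))) + (Fc_congr τ z (-32) (86) (8) (34) (-1) (1) (by norm_num) (Or.inr (by norm_num))) + (Fc_congr τ z (-36) (98) (4) (22) (-1) (1) (by norm_num) (Or.inr (by norm_num))) + (Fc_congr τ z (-40) (110) (0) (10) (-1) (1) (by norm_num) (Or.inr (by norm_num)))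

lemma qL5 (τ : UpperHalfPlane) (z : ℂ) :
    Th1 (15) 18 τ z * Th1 (1) 2 τ z = Fc τ z 16 2 + Fc τ z 12 14 + Fc τ z 8 26 + Fc τ z 4 38 + Fc τ z 0 50 + Fc τ z 36 58 + Fc τ z 32 46 + Fc τ z 28 34 + Fc τ z 24 22 + Fc τ z 20 10 := by
  rw [P1 τ z (15) (1) (2) (by norm_num)]
  norm_num [Finset.sum_range_succ]
  linear_combination (Fc_congr τ z (-4) (62) (36) (58) (-1) (1) (by norm_num) (Or.inr (by norm_num))) + (Fc_congr τ z (-8) (74) (32) (46) (-1) (1) (by norm_num) (Or.inr (by norm_num))) + (Fc_congr τ z (-12) (86) (28) (34) (-1) (1) (by norm_num) (Or.inr (by norm_num))) + (Fc_congr τ z (-16) (98) (24) (22) (-1) (1) (by norm_num) (Or.inr (by norm_num))) + (Fc_congr τ z (-20) (110) (20) (10) (-1) (1) (by norm_num) (Or.inr (by norm_num)))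

lemma qL6 (τ : UpperHalfPlane) (z : ℂ) :
    Th1 (15) 18 τ z * Th1 (-1) 2 τ z = Fc τ z 14 8 + Fc τ z 10 20 + Fc τ z 6 32 + Fc τ z 2 44 + Fc τ z 38 56 + Fc τ z 34 52 + Fc τ z 30 40 + Fc τ z 26 28 + Fc τ z 22 16 + Fc τ z 18 4 := by
  rw [P1 τ z (15) (-1) (8) (by norm_num)]
  norm_num [Finset.sum_range_succ]
  linear_combination (Fc_congr τ z (-2) (56) (38) (56) (-1) (0) (by norm_num) (Or.inl (by norm_num))) + (Fc_congr τ z (-6) (68) (34) (52) (-1) (1) (by norm_num) (Or.inr (by norm_num))) + (Fc_congr τ z (-10) (80) (30) (40) (-1) (1) (by norm_num) (Or.inr (by norm_num))) + (Fc_congr τ z (-14) (92) (26) (28) (-1) (1) (by norm_num) (Or.inr (by norm_num))) + (Fc_congr τ z (-18) (104) (22) (16) (-1) (1) (by norm_num) (Or.inr (by norm_num))) + (Fc_congr τ z (-22) (116) (18) (4) (-1) (1) (by norm_num) (Or.inr (by norm_num)))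

lemma qL7 (τ : UpperHalfPlane) (z : ℂ) :
    Th1 (-15) 18 τ z * Th1 (1) 2 τ z = Fc τ z 26 8 + Fc τ z 22 4 + Fc τ z 18 16 + Fc τ z 14 28 + Fc τ z 10 40 + Fc τ z 6 52 + Fc τ z 2 56 + Fc τ z 38 44 + Fc τ z 34 32 + Fc τ z 30 20 := by
  rw [P1 τ z (-15) (1) (-8) (by norm_num)]
  norm_num [Finset.sum_range_succ]
  linear_combination (Fc_congr τ z (-14) (-8) (26) (8) (-1) (0) (by norm_num) (Or.inr (by norm_num))) + (Fc_congr τ z (-18) (4) (22) (4) (-1) (0) (by norm_num) (Or.inl (by norm_num))) + (Fc_congr τ z (-22) (16) (18) (16) (-1) (0) (by norm_num) (Or.inl (by norm_num))) + (Fc_congr τ z (-26) (28) (14) (28) (-1) (0) (by norm_num) (Or.inl (by norm_num))) + (Fc_congr τ z (-30) (40) (10) (40) (-1) (0) (by norm_num) (Or.inl (by norm_num))) + (Fc_congr τ z (-34) (52) (6) (52) (-1) (0) (by norm_num) (Or.inl (by norm_num))) + (Fc_congr τ z (-38) (64) (2) (56) (-1) (1) (by norm_num) (Or.inr (by norm_num)))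 + (Fc_congr τ z (-42) (76) (38) (44) (-2) (1) (by norm_num) (Or.inr (by norm_num))) + (Fc_congr τ z (-46) (88) (34) (32) (-2) (1) (by norm_num) (Or.inr (by norm_num))) + (Fc_congr τ z (-50) (100) (30) (20) (-2) (1) (by norm_num) (Or.inr (by norm_num)))

lemma qL8 (τ : UpperHalfPlane) (z : ℂ) :
    Th1 (-15) 18 τ z * Th1 (-1) 2 τ z = Fc τ z 24 2 + Fc τ z 20 10 + Fc τ z 16 22 + Fc τ z 12 34 + Fc τ z 8 46 + Fc τ z 4 58 + Fc τ z 0 50 + Fc τ z 36 38 + Fc τ z 32 26 + Fc τ z 28 14 := by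
  rw [P1 τ z (-15) (-1) (-2) (by norm_num)]
  norm_num [Finset.sum_range_succ]
  linear_combination (Fc_congr τ z (-16) (-2) (24) (2) (-1) (0) (by norm_num) (Or.inr (by norm_num))) + (Fc_congr τ z (-20) (10) (20) (10) (-1) (0) (by norm_num) (Or.inl (by norm_num))) + (Fc_congr τ z (-24) (22) (16) (22) (-1) (0) (by norm_num) (Or.inl (by norm_num))) + (Fc_congr τ z (-28) (34) (12) (34) (-1) (0) (by norm_num) (Or.inl (by norm_num))) + (Fc_congr τ z (-32) (46) (8) (46) (-1) (0) (by norm_num) (Or.inl (by norm_num))) + (Fc_congr τ z (-36) (58) (4) (58) (-1) (0) (by norm_num) (Or.inl (by norm_num))) + (Fc_congr τ z (-40) (70) (0) (50) (-1) (1) (by norm_num) (Or.inr (by norm_num))) + (Fc_congr τ z (-44) (82) (36) (38) (-2) (1) (by norm_num) (Or.inr (by norm_num))) + (Fc_congr τ z (-48) (94) (32) (26) (-2) (1) (by norm_num) (Or.inr (by norm_num))) + (Fc_congr τ z (-52) (106) (28) (14) (-2) (1) (by norm_num) (Or.inr (by norm_num)))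

lemma qL9 (τ : UpperHalfPlane) (z : ℂ) :
    Th1 (9) 18 τ z * Th1 (1) 2 τ z = Fc τ z 10 0 + Fc τ z 6 12 + Fc τ z 2 24 + Fc τ z 38 36 + Fc τ z 34 48 + Fc τ z 30 60 + Fc τ z 26 48 + Fc τ z 22 36 + Fc τ z 18 24 + Fc τ z 14 12 := by
  rw [P1 τ z (9) (1) (0) (by norm_num)]
  norm_num [Finset.sum_range_succ]
  linear_combination (Fc_congr τ z (-2) (36) (38) (36) (-1) (0) (by norm_num) (Or.inl (by norm_num))) + (Fc_congr τ z (-6) (48) (34) (48) (-1) (0) (by norm_num) (Or.inl (by norm_num))) + (Fc_congr τ z (-10) (60) (30) (60) (-1) (0) (by norm_num) (Or.inl (by norm_num))) + (Fc_congr τ z (-14) (72) (26) (48) (-1) (1) (by norm_num) (Or.inr (by norm_num))) + (Fc_congr τ z (-18) (84) (22) (36) (-1) (1) (by norm_num) (Or.inr (by norm_num))) + (Fc_congr τ z (-22) (96) (18) (24) (-1) (1) (by norm_num) (Or.inr (by norm_num))) + (Fc_congr τ z (-26) (108) (14) (12) (-1) (1) (by norm_num) (Or.inr (by norm_num)))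

lemma qL10 (τ : UpperHalfPlane) (z : ℂ) :
    Th1 (9) 18 τ z * Th1 (-1) 2 τ z = Fc τ z 8 6 + Fc τ z 4 18 + Fc τ z 0 30 + Fc τ z 36 42 + Fc τ z 32 54 + Fc τ z 28 54 + Fc τ z 24 42 + Fc τ z 20 30 + Fc τ z 16 18 + Fc τ z 12 6 := by
  rw [P1 τ z (9) (-1) (6) (by norm_num)]
  norm_num [Finset.sum_range_succ]
  linear_combination (Fc_congr τ z (-4) (42) (36) (42) (-1) (0) (by norm_num) (Or.inl (by norm_num))) + (Fc_congr τ z (-8) (54) (32) (54) (-1) (0) (by norm_num) (Or.inl (by norm_num))) + (Fc_congr τ z (-12) (66) (28) (54) (-1) (1) (by norm_num) (Or.inr (by norm_num))) + (Fc_congr τ z (-16) (78) (24) (42) (-1) (1) (by norm_num) (Or.inr (by norm_num))) + (Fc_congr τ z (-20) (90) (20) (30) (-1) (1) (by norm_num) (Or.inr (by norm_num))) + (Fc_congr τ z (-24) (102) (16) (18) (-1) (1) (by norm_num) (Or.inr (by norm_num))) + (Fc_congr τ z (-28) (114) (12) (6) (-1) (1) (by norm_num) (Or.inr (by norm_nu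m)))

lemma qL11 (τ : UpperHalfPlane) (z : ℂ) :
    Th1 (-9) 18 τ z * Th1 (1) 2 τ z = Fc τ z 32 6 + Fc τ z 28 6 + Fc τ z 24 18 + Fc τ z 20 30 + Fc τ z 16 42 + Fc τ z 12 54 + Fc τ z 8 54 + Fc τ z 4 42 + Fc τ z 0 30 + Fc τ z 36 18 := by
  rw [P1 τ z (-9) (1) (-6) (by norm_num)]
  norm_num [Finset.sum_range_succ]
  linear_combination (Fc_congr τ z (-8) (-6) (32) (6) (-1) (0) (by norm_num) (Or.inr (by norm_num))) + (Fc_congr τ z (-12) (6) (28) (6) (-1) (0) (by norm_num) (Or.inl (by norm_num))) + (Fc_congr τ z (-16) (18) (24) (18) (-1) (0) (by norm_num) (Or.inl (by norm_num))) + (Fc_congr τ z (-20) (30) (20) (30) (-1) (0) (by norm_num) (Or.inl (by norm_num))) + (Fc_congr τ z (-24) (42) (16) (42) (-1) (0) (by norm_num) (Or.inl (by norm_num))) + (Fc_congr τ z (-28) (54) (12) (54) (-1) (0) (by norm_num) (Or.inl (by norm_num))) + (Fc_congr τ z (-32) (66) (8) (54) (-1) (1) (by norm_num) (Or.inr (by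 norm_num))) + (Fc_congr τ z (-36) (78) (4) (42) (-1) (1) (by norm_num) (Or.inr (by norm_num))) + (Fc_congr τ z (-40) (90) (0) (30) (-1) (1) (by norm_num) (Or.inr (by norm_num))) + (Fc_congr τ z (-44) (102) (36) (18) (-2) (1) (by norm_num) (Or.inr (by norm_num)))

lemma qL12 (τ : UpperHalfPlane) (z : ℂ) :
    Th1 (-9) 18 τ z * Th1 (-1) 2 τ z = Fc τ z 30 0 + Fc τ z 26 12 + Fc τ z 22 24 + Fc τ z 18 36 + Fc τ z 14 48 + Fc τ z 10 60 + Fc τ z 6 48 + Fc τ z 2 36 + Fc τ z 38 24 + Fc τ z 34 12 := by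
  rw [P1 τ z (-9) (-1) (0) (by norm_num)]
  norm_num [Finset.sum_range_succ]
  linear_combination (Fc_congr τ z (-10) (0) (30) (0) (-1) (0) (by norm_num) (Or.inl (by norm_num))) + (Fc_congr τ z (-14) (12) (26) (12) (-1) (0) (by norm_num) (Or.inl (by norm_num))) + (Fc_congr τ z (-18) (24) (22) (24) (-1) (0) (by norm_num) (Or.inl (by norm_num))) + (Fc_congr τ z (-22) (36) (18) (36) (-1) (0) (by norm_num) (Or.inl (by norm_num))) + (Fc_congr τ z (-26) (48) (14) (48) (-1) (0) (by norm_num) (Or.inl (by norm_num))) + (Fc_congr τ z (-30) (60) (10) (60) (-1) (0) (by norm_num) (Or.inl (by norm_num))) + (Fc_congr τ z (-34) (72) (6) (48) (-1) (1) (by norm_num) (Or.inr (by norm_num))) + (Fc_congr τ z (-38) (84) (2) (36) (-1) (1) (by norm_num) (Or.inr (by norm_num))) + (Fc_congr τ z (-42) (96) (38) (24) (-2) (1) (by norm_num) (Or.inr (by norm_num))) + (Fc_congr τ z (-46) (108) (34) (12) (-2) (1) (by norm_num) (Or.inr (by norm_num)))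

lemma qR1 (τ : UpperHalfPlane) (z : ℂ) :
    Th1 (1) 10 τ z * Th1 (3) 10 τ z = Fc τ z 4 2 + Fc τ z 4 38 + Fc τ z 4 42 + Fc τ z 24 18 + Fc τ z 24 58 + Fc τ z 24 22 := by
  rw [P2 τ z (1) (3)]
  norm_num [Finset.sum_range_succ]
  linear_combination (Fc_congr τ z (4) (-2) (4) (2) (0) (0) (by norm_num) (Or.inr (by norm_num))) + (Fc_congr τ z (4) (78) (4) (42) (0) (1) (by norm_num) (Or.inr (by norm_num))) + (Fc_congr τ z (24) (98) (24) (22) (0) (1) (by norm_num) (Or.inr (by norm_num)))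

lemma qR2 (τ : UpperHalfPlane) (z : ℂ) :
    Th1 (1) 10 τ z * Th1 (-3) 10 τ z = Fc τ z 38 4 + Fc τ z 38 44 + Fc τ z 38 36 + Fc τ z 18 24 + Fc τ z 18 56 + Fc τ z 18 16 := by
  rw [P2 τ z (1) (-3)]
  norm_num [Finset.sum_range_succ]
  linear_combination (Fc_congr τ z (-2) (4) (38) (4) (-1) (0) (by norm_num) (Or.inl (by norm_num))) + (Fc_congr τ z (-2) (44) (38) (44) (-1) (0) (by norm_num) (Or.inl (by norm_num))) + (Fc_congr τ z (-2) (84) (38) (36) (-1) (1) (by norm_num) (Or.inr (by norm_num))) + (Fc_congr τ z (18) (64) (18) (56) (0) (1) (by norm_num) (Or.inr (by norm_num))) + (Fc_congr τ z (18) (104) (18) (16) (0) (1) (by norm_num) (Or.inr (by norm_num)))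

lemma qR3 (τ : UpperHalfPlane) (z : ℂ) :
    Th1 (1) 10 τ z * Th1 (7) 10 τ z = Fc τ z 8 6 + Fc τ z 8 34 + Fc τ z 8 46 + Fc τ z 28 14 + Fc τ z 28 54 + Fc τ z 28 26 := by
  rw [P2 τ z (1) (7)]
  norm_num [Finset.sum_range_succ]
  linear_combination (Fc_congr τ z (8) (-6) (8) (6) (0) (0) (by norm_num) (Or.inr (by norm_num))) + (Fc_congr τ z (8) (74) (8) (46) (0) (1) (by norm_num) (Or.inr (by norm_num))) + (Fc_congr τ z (28) (94) (28) (26) (0) (1) (by norm_num) (Or.inr (by norm_num)))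

lemma qR4 (τ : UpperHalfPlane) (z : ℂ) :
    Th1 (1) 10 τ z * Th1 (-7) 10 τ z = Fc τ z 34 8 + Fc τ z 34 48 + Fc τ z 34 32 + Fc τ z 14 28 + Fc τ z 14 52 + Fc τ z 14 12 := by
  rw [P2 τ z (1) (-7)]
  norm_num [Finset.sum_range_succ]
  linear_combination (Fc_congr τ z (-6) (8) (34) (8) (-1) (0) (by norm_num) (Or.inl (by norm_num))) + (Fc_congr τ z (-6) (48) (34) (48) (-1) (0) (by norm_num) (Or.inl (by norm_num))) + (Fc_congr τ z (-6) (88) (34) (32) (-1) (1) (by norm_num) (Or.inr (by norm_num))) + (Fc_congr τ z (14) (68) (14) (52) (0) (1) (by norm_num) (Or.inr (by norm_num))) + (Fc_congr τ z (14) (108) (14) (12) (0) (1) (by norm_num) (Or.inr (by norm_num)))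

lemma qR5 (τ : UpperHalfPlane) (z : ℂ) :
    Th1 (-1) 10 τ z * Th1 (3) 10 τ z = Fc τ z 2 4 + Fc τ z 2 36 + Fc τ z 2 44 + Fc τ z 22 16 + Fc τ z 22 56 + Fc τ z 22 24 := by
  rw [P2 τ z (-1) (3)]
  norm_num [Finset.sum_range_succ]
  linear_combination (Fc_congr τ z (2) (-4) (2) (4) (0) (0) (by norm_num) (Or.inr (by norm_num))) + (Fc_congr τ z (2) (76) (2) (44) (0) (1) (by norm_num) (Or.inr (by norm_num))) + (Fc_congr τ z (22) (96) (22) (24) (0) (1) (by norm_num) (Or.inr (by norm_num)))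

lemma qR6 (τ : UpperHalfPlane) (z : ℂ) :
    Th1 (-1) 10 τ z * Th1 (-3) 10 τ z = Fc τ z 36 2 + Fc τ z 36 42 + Fc τ z 36 38 + Fc τ z 16 22 + Fc τ z 16 58 + Fc τ z 16 18 := by
  rw [P2 τ z (-1) (-3)]
  norm_num [Finset.sum_range_succ]
  linear_combination (Fc_congr τ z (-4) (2) (36) (2) (-1) (0) (by norm_num) (Or.inl (by norm_num))) + (Fc_congr τ z (-4) (42) (36) (42) (-1) (0) (by norm_num) (Or.inl (by norm_num))) + (Fc_congr τ z (-4) (82) (36) (38) (-1) (1) (by norm_num) (Or.inr (by norm_num))) + (Fc_congr τ z (16) (62) (16) (58) (0) (1) (by norm_num) (Or.inr (by norm_num))) + (Fc_congr τ z (16) (102) (16) (18) (0) (1) (by norm_num) (Or.inr (by norm_num)))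

lemma qR7 (τ : UpperHalfPlane) (z : ℂ) :
    Th1 (-1) 10 τ z * Th1 (7) 10 τ z = Fc τ z 6 8 + Fc τ z 6 32 + Fc τ z 6 48 + Fc τ z 26 12 + Fc τ z 26 52 + Fc τ z 26 28 := by
  rw [P2 τ z (-1) (7)]
  norm_num [Finset.sum_range_succ]
  linear_combination (Fc_congr τ z (6) (-8) (6) (8) (0) (0) (by norm_num) (Or.inr (by norm_num))) + (Fc_congr τ z (6) (72) (6) (48) (0) (1) (by norm_num) (Or.inr (by norm_num))) + (Fc_congr τ z (26) (92) (26) (28) (0) (1) (by norm_num) (Or.inr (by norm_num)))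

lemma qR8 (τ : UpperHalfPlane) (z : ℂ) :
    Th1 (-1) 10 τ z * Th1 (-7) 10 τ z = Fc τ z 32 6 + Fc τ z 32 46 + Fc τ z 32 34 + Fc τ z 12 26 + Fc τ z 12 54 + Fc τ z 12 14 := by
  rw [P2 τ z (-1) (-7)]
  norm_num [Finset.sum_range_succ]
  linear_combination (Fc_congr τ z (-8) (6) (32) (6) (-1) (0) (by norm_num) (Or.inl (by norm_num))) + (Fc_congr τ z (-8) (46) (32) (46) (-1) (0) (by norm_num) (Or.inl (by norm_num))) + (Fc_congr τ z (-8) (86) (32) (34) (-1) (1) (by norm_num) (Or.inr (by norm_num))) + (Fc_congr τ z (12) (66) (12) (54) (0) (1) (by norm_num) (Or.inr (by norm_num))) + (Fc_congr τ z (12) (106) (12) (14) (0) (1) (by norm_num) (Or.inr (by norm_num)))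

lemma qR9 (τ : UpperHalfPlane) (z : ℂ) :
    Th1 (9) 10 τ z * Th1 (3) 10 τ z = Fc τ z 12 6 + Fc τ z 12 46 + Fc τ z 12 34 + Fc τ z 32 26 + Fc τ z 32 54 + Fc τ z 32 14 := by
  rw [P2 τ z (9) (3)]
  norm_num [Finset.sum_range_succ]
  linear_combination (Fc_congr τ z (12) (86) (12) (34) (0) (1) (by norm_num) (Or.inr (by norm_num))) + (Fc_congr τ z (32) (66) (32) (54) (0) (1) (by norm_num) (Or.inr (by norm_num))) + (Fc_congr τ z (32) (106) (32) (14) (0) (1) (by norm_num) (Or.inr (by norm_num)))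

lemma qR10 (τ : UpperHalfPlane) (z : ℂ) :
    Th1 (9) 10 τ z * Th1 (-3) 10 τ z = Fc τ z 6 12 + Fc τ z 6 52 + Fc τ z 6 28 + Fc τ z 26 32 + Fc τ z 26 48 + Fc τ z 26 8 := by
  rw [P2 τ z (9) (-3)]
  norm_num [Finset.sum_range_succ]
  linear_combination (Fc_congr τ z (6) (92) (6) (28) (0) (1) (by norm_num) (Or.inr (by norm_num))) + (Fc_congr τ z (26) (72) (26) (48) (0) (1) (by norm_num) (Or.inr (by norm_num))) + (Fc_congr τ z (26) (112) (26) (8) (0) (1) (by norm_num) (Or.inr (by norm_num)))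

lemma qR11 (τ : UpperHalfPlane) (z : ℂ) :
    Th1 (9) 10 τ z * Th1 (7) 10 τ z = Fc τ z 16 2 + Fc τ z 16 42 + Fc τ z 16 38 + Fc τ z 36 22 + Fc τ z 36 58 + Fc τ z 36 18 := by
  rw [P2 τ z (9) (7)]
  norm_num [Finset.sum_range_succ]
  linear_combination (Fc_congr τ z (16) (82) (16) (38) (0) (1) (by norm_num) (Or.inr (by norm_num))) + (Fc_congr τ z (36) (62) (36) (58) (0) (1) (by norm_num) (Or.inr (by norm_num))) + (Fc_congr τ z (36) (102) (36) (18) (0) (1) (by norm_num) (Or.inr (by norm_num)))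

lemma qR12 (τ : UpperHalfPlane) (z : ℂ) :
    Th1 (9) 10 τ z * Th1 (-7) 10 τ z = Fc τ z 2 16 + Fc τ z 2 56 + Fc τ z 2 24 + Fc τ z 22 36 + Fc τ z 22 44 + Fc τ z 22 4 := by
  rw [P2 τ z (9) (-7)]
  norm_num [Finset.sum_range_succ]
  linear_combination (Fc_congr τ z (2) (96) (2) (24) (0) (1) (by norm_num) (Or.inr (by norm_num))) + (Fc_congr τ z (22) (76) (22) (44) (0) (1) (by norm_num) (Or.inr (by norm_num))) + (Fc_congr τ z (22) (116) (22) (4) (0) (1) (by norm_num) (Or.inr (by norm_num)))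

lemma qR13 (τ : UpperHalfPlane) (z : ℂ) :
    Th1 (-9) 10 τ z * Th1 (3) 10 τ z = Fc τ z 34 12 + Fc τ z 34 28 + Fc τ z 34 52 + Fc τ z 14 8 + Fc τ z 14 48 + Fc τ z 14 32 := by
  rw [P2 τ z (-9) (3)]
  norm_num [Finset.sum_range_succ]
  linear_combination (Fc_congr τ z (-6) (-12) (34) (12) (-1) (0) (by norm_num) (Or.inr (by norm_num))) + (Fc_congr τ z (-6) (28) (34) (28) (-1) (0) (by norm_num) (Or.inl (by norm_num))) + (Fc_congr τ z (-6) (68) (34) (52) (-1) (1) (by norm_num) (Or.inr (by norm_num))) + (Fc_congr τ z (14) (88) (14) (32) (0) (1) (by norm_num) (Or.inr (by norm_num)))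

lemma qR14 (τ : UpperHalfPlane) (z : ℂ) :
    Th1 (-9) 10 τ z * Th1 (-3) 10 τ z = Fc τ z 28 6 + Fc τ z 28 34 + Fc τ z 28 46 + Fc τ z 8 14 + Fc τ z 8 54 + Fc τ z 8 26 := by
  rw [P2 τ z (-9) (-3)]
  norm_num [Finset.sum_range_succ]
  linear_combination (Fc_congr τ z (-12) (-6) (28) (6) (-1) (0) (by norm_num) (Or.inr (by norm_num))) + (Fc_congr τ z (-12) (34) (28) (34) (-1) (0) (by norm_num) (Or.inl (by norm_num))) + (Fc_congr τ z (-12) (74) (28) (46) (-1) (1) (by norm_num) (Or.inr (by norm_num))) + (Fc_congr τ z (8) (94) (8) (26) (0) (1) (by norm_num) (Or.inr (by norm_num)))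

lemma qR15 (τ : UpperHalfPlane) (z : ℂ) :
    Th1 (-9) 10 τ z * Th1 (7) 10 τ z = Fc τ z 38 16 + Fc τ z 38 24 + Fc τ z 38 56 + Fc τ z 18 4 + Fc τ z 18 44 + Fc τ z 18 36 := by
  rw [P2 τ z (-9) (7)]
  norm_num [Finset.sum_range_succ]
  linear_combination (Fc_congr τ z (-2) (-16) (38) (16) (-1) (0) (by norm_num) (Or.inr (by norm_num))) + (Fc_congr τ z (-2) (24) (38) (24) (-1) (0) (by norm_num) (Or.inl (by norm_num))) + (Fc_congr τ z (-2) (64) (38) (56) (-1) (1) (by norm_num) (Or.inr (by norm_num))) + (Fc_congr τ z (18) (84) (18) (36) (0) (1) (by norm_num) (Or.inr (by norm_num)))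

lemma qR16 (τ : UpperHalfPlane) (z : ℂ) :
    Th1 (-9) 10 τ z * Th1 (-7) 10 τ z = Fc τ z 24 2 + Fc τ z 24 38 + Fc τ z 24 42 + Fc τ z 4 18 + Fc τ z 4 58 + Fc τ z 4 22 := by
  rw [P2 τ z (-9) (-7)]
  norm_num [Finset.sum_range_succ]
  linear_combination (Fc_congr τ z (-16) (-2) (24) (2) (-1) (0) (by norm_num) (Or.inr (by norm_num))) + (Fc_congr τ z (-16) (38) (24) (38) (-1) (0) (by norm_num) (Or.inl (by norm_num))) + (Fc_congr τ z (-16) (78) (24) (42) (-1) (1) (by norm_num) (Or.inr (by norm_num))) + (Fc_congr τ z (4) (98) (4) (22) (0) (1) (by norm_num) (Or.inr (by norm_num)))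

lemma qR17 (τ : UpperHalfPlane) (z : ℂ) :
    Th1 (5) 10 τ z * Th1 (5) 10 τ z = Fc τ z 10 0 + Fc τ z 10 40 + Fc τ z 10 40 + Fc τ z 30 20 + Fc τ z 30 60 + Fc τ z 30 20 := by
  rw [P2 τ z (5) (5)]
  norm_num [Finset.sum_range_succ]
  linear_combination (Fc_congr τ z (10) (80) (10) (40) (0) (1) (by norm_num) (Or.inr (by norm_num))) + (Fc_congr τ z (30) (100) (30) (20) (0) (1) (by norm_num) (Or.inr (by norm_num)))

lemma qR18 (τ : UpperHalfPlane) (z : ℂ) :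
    Th1 (5) 10 τ z * Th1 (-5) 10 τ z = Fc τ z 0 10 + Fc τ z 0 50 + Fc τ z 0 30 + Fc τ z 20 30 + Fc τ z 20 50 + Fc τ z 20 10 := by
  rw [P2 τ z (5) (-5)]
  norm_num [Finset.sum_range_succ]
  linear_combination (Fc_congr τ z (0) (90) (0) (30) (0) (1) (by norm_num) (Or.inr (by norm_num))) + (Fc_congr τ z (20) (70) (20) (50) (0) (1) (by norm_num) (Or.inr (by norm_num))) + (Fc_congr τ z (20) (110) (20) (10) (0) (1) (by norm_num) (Or.inr (by norm_num)))

lemma qR19 (τ : UpperHalfPlane) (z : ℂ) :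
    Th1 (-5) 10 τ z * Th1 (-5) 10 τ z = Fc τ z 30 0 + Fc τ z 30 40 + Fc τ z 30 40 + Fc τ z 10 20 + Fc τ z 10 60 + Fc τ z 10 20 := by
  rw [P2 τ z (-5) (-5)]
  norm_num [Finset.sum_range_succ]
  linear_combination (Fc_congr τ z (-10) (0) (30) (0) (-1) (0) (by norm_num) (Or.inl (by norm_num))) + (Fc_congr τ z (-10) (40) (30) (40) (-1) (0) (by norm_num) (Or.inl (by norm_num))) + (Fc_congr τ z (-10) (80) (30) (40) (-1) (1) (by norm_num) (Or.inr (by norm_num))) + (Fc_congr τ z (10) (100) (10) (20) (0) (1) (by norm_num) (Or.inr (by norm_num)))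

lemma Kident (τ : UpperHalfPlane) (z : ℂ) :
    (Th1 3 18 τ z - Th1 (-3) 18 τ z + (Th1 15 18 τ z - Th1 (-15) 18 τ z)
        - (Th1 9 18 τ z - Th1 (-9) 18 τ z)) * (Th1 1 2 τ z - Th1 (-1) 2 τ z)
      = (Th1 1 10 τ z - Th1 (-1) 10 τ z + (Th1 9 10 τ z - Th1 (-9) 10 τ z))
          * (Th1 3 10 τ z - Th1 (-3) 10 τ z + (Th1 7 10 τ z - Th1 (-7) 10 τ z))
        - (Th1 5 10 τ z - Th1 (-5) 10 τ z) ^ 2 := by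
  linear_combination qL1 τ z - qL2 τ z - qL3 τ z + qL4 τ z + qL5 τ z - qL6 τ z - qL7 τ z + qL8 τ z - qL9 τ z + qL10 τ z + qL11 τ z - qL12 τ z - qR1 τ z + qR2 τ z - qR3 τ z + qR4 τ z + qR5 τ z - qR6 τ z + qR7 τ z - qR8 τ z - qR9 τ z + qR10 τ z - qR11 τ z + qR12 τ z + qR13 τ z - qR14 τ z + qR15 τ z - qR16 τ z + qR17 τ z - 2 * (qR18 τ z) + qR19 τ z


/-- The identity between normalized Weyl–Kac characters of `ŝl₂` at levels 16 and 8: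
`χ^{(16)}₂ + χ^{(16)}₁₄ − χ^{(16)}₈ = (χ^{(8)}₀ + χ^{(8)}₈)(χ^{(8)}₂ + χ^{(8)}₆) − (χ^{(8)}₄)²`. -/
theorem affine_sl2_character_identity_level16_level8 (τ : UpperHalfPlane) (z : ℂ)
    (h : Th1 1 2 τ z - Th1 (-1) 2 τ z ≠ 0) :
    chiA1 16 2 τ z + chiA1 16 14 τ z - chiA1 16 8 τ z =
      (chiA1 8 0 τ z + chiA1 8 8 τ z) * (chiA1 8 2 τ z + chiA1 8 6 τ z) -
        (chiA1 8 4 τ z) ^ 2 := by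
  have K := Kident τ z
  simp only [chiA1]
  norm_num
  simp only [← add_div, div_sub_div_same]
  rw [div_mul_div_comm, div_pow, ← sq (Th1 1 2 τ z - Th1 (-1) 2 τ z), ← sub_div,
    div_eq_div_iff h (pow_ne_zero 2 h)]
  linear_combination (Th1 1 2 τ z - Th1 (-1) 2 τ z) * K
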